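/- The sum over all isomorphism classes of elliptic curves over F_p of 1/#Aut_{F_p}(E) equals p (the mass formula), i.e. Σ_E 1/#Aut_{F_p}(E) = p. -/

import Mathlib

open WeierstrassCurve

/-- An elliptic curve over `F`: a Weierstrass curve with invertible discriminant. -/
def EllCurve (F : Type*) [CommRing F] := {W : WeierstrassCurve F // W.IsElliptic}

/-- Two elliptic curves are isomorphic over `F` iff they differ by a change of variables. -/
def isoSetoid (F : Type*) [CommRing F] : Setoid (EllCurve F) :=
  Setoid.comap Subtype.val
    (MulAction.orbitRel (WeierstrassCurve.VariableChange F) (WeierstrassCurve F))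

/-- Isomorphism classes over `F` of elliptic curves over `F`. -/
def EllCurveClasses (F : Type*) [CommRing F] := Quotient (isoSetoid F)

/-- The order of the automorphism group of `E` over `F`, i.e. of the stabilizer of `E`
under changes of variables. -/
noncomputable def autCard {F : Type*} [CommRing F] (E : EllCurve F) : ℕ :=
  Nat.card {C : WeierstrassCurve.VariableChange F // C • E.1 = E.1}

/-- The number of `F`-rational points of `E` (including the point at infinity). -/
noncomputable def numPoints {F : Type*} [CommRing F] (E : EllCurve F) : ℕ :=
  Nat.card E.1.toAffine.Point

section Aux

lemma delta_explicit {F : Type*} [CommRing F] (W : WeierstrassCurve F) :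
    W.Δ = (-(W.a₁^2+4*W.a₂)^2*(W.a₁^2*W.a₆+4*W.a₂*W.a₆-W.a₁*W.a₃*W.a₄+W.a₂*W.a₃^2-W.a₄^2) - 8*(2*W.a₄+W.a₁*W.a₃)^3 - 27*(W.a₃^2+4*W.a₆)^2 + 9*(W.a₁^2+4*W.a₂)*(2*W.a₄+W.a₁*W.a₃)*(W.a₃^2+4*W.a₆)) := by
  simp only [WeierstrassCurve.Δ, WeierstrassCurve.b₂, WeierstrassCurve.b₄, WeierstrassCurve.b₆,
    WeierstrassCurve.b₈]


lemma exists_RT_of_char {F : Type*} [Field F] (h2 : (2:F) ≠ 0) (h3 : (3:F) ≠ 0)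
    (a1 a2 a3 a4 a6 : F)
    (hD : (-(a1^2+4*a2)^2*(a1^2*a6+4*a2*a6-a1*a3*a4+a2*a3^2-a4^2) - 8*(2*a4+a1*a3)^3 - 27*(a3^2+4*a6)^2 + 9*(a1^2+4*a2)*(2*a4+a1*a3)*(a3^2+4*a6)) = 0) :
    ∃ R T : F, a3 + R*a1 + 2*T = 0 ∧ a4 + 2*R*a2 - T*a1 + 3*R^2 = 0 ∧
      a6 + R*a4 + R^2*a2 + R^3 - T*a3 - T^2 - R*T*a1 = 0 := by
  have h12 : (12:F) ≠ 0 := by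
    rw [show (12:F) = 2*2*3 by norm_num]
    exact mul_ne_zero (mul_ne_zero h2 h2) h3
  have h144 : (144:F) ≠ 0 := by
    rw [show (144:F) = 12^2 by norm_num]; exact pow_ne_zero 2 h12
  have h1728 : (1728:F) ≠ 0 := by
    rw [show (1728:F) = 12^3 by norm_num]; exact pow_ne_zero 3 h12
  by_cases hc4 : ((a1^2+4*a2)^2 - 24*(2*a4+a1*a3)) = 0
  · -- cusp case
    have hc6sq : ((-(a1^2+4*a2)^3 + 36*(a1^2+4*a2)*(2*a4+a1*a3) - 216*(a3^2+4*a6)))^2 = 0 := by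
      linear_combination ((1 : F) * a1^8 + (16 : F) * a1^6 * a2 + (-48 : F) * a1^5 * a3 + (96 : F) * a1^4 * a2^2 + (-96 : F) * a1^4 * a4 + (-384 : F) * a1^3 * a2 * a3 + (256 : F) * a1^2 * a2^3 + (-768 : F) * a1^2 * a2 * a4 + (576 : F) * a1^2 * a3^2 + (-768 : F) * a1 * a2^2 * a3 + (2304 : F) * a1 * a3 * a4 + (256 : F) * a2^4 + (-1536 : F) * a2^2 * a4 + (2304 : F) * a4^2) * hc4 - (1728:F) * hD
    have hc6 : (-(a1^2+4*a2)^3 + 36*(a1^2+4*a2)*(2*a4+a1*a3) - 216*(a3^2+4*a6)) = 0 := pow_eq_zero_iff (by norm_num : (2:ℕ) ≠ 0) |>.mp hc6sq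
    obtain ⟨R, hR⟩ : ∃ R : F, 12*R + (a1^2+4*a2) = 0 :=
      ⟨-(a1^2+4*a2)/12, by field_simp; try ring⟩
    obtain ⟨T, hT⟩ : ∃ T : F, 2*T + a1*R + a3 = 0 :=
      ⟨-(a1*R+a3)/2, by field_simp; try ring⟩
    refine ⟨R, T, by linear_combination hT, ?_, ?_⟩
    · have key : (144:F) * (a4 + 2*R*a2 - T*a1 + 3*R^2) = 0 := by
        linear_combination ((-72 : F) * a1) * hT + ((36 : F) * R + (3 : F) * a1^2 + (12 : F) * a2) * hR + ((-3 : F)) * hc4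
      exact (mul_eq_zero.mp key).resolve_left h144
    · have key : (1728:F) * (a6 + R*a4 + R^2*a2 + R^3 - T*a3 - T^2 - R*T*a1) = 0 := by
        linear_combination ((-864 : F) * T + (-432 : F) * R * a1 + (-432 : F) * a3) * hT + ((144 : F) * R^2 + (24 : F) * R * a1^2 + (96 : F) * R * a2 + (-2 : F) * a1^4 + (-16 : F) * a1^2 * a2 + (72 : F) * a1 * a3 + (-32 : F) * a2^2 + (144 : F) * a4) * hR + (-2:F) * hc6
      exact (mul_eq_zero.mp key).resolve_left h1728
  · -- node case
    have h12c4 : 12*(((a1^2+4*a2)^2 - 24*(2*a4+a1*a3))) ≠ 0 := mul_ne_zero h12 hc4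
    obtain ⟨R, hR⟩ : ∃ R : F, 12*(((a1^2+4*a2)^2 - 24*(2*a4+a1*a3)))*R + ((a1^2+4*a2)*(((a1^2+4*a2)^2 - 24*(2*a4+a1*a3))) + (-(a1^2+4*a2)^3 + 36*(a1^2+4*a2)*(2*a4+a1*a3) - 216*(a3^2+4*a6))) = 0 :=
      ⟨-((a1^2+4*a2)*(((a1^2+4*a2)^2 - 24*(2*a4+a1*a3))) + (-(a1^2+4*a2)^3 + 36*(a1^2+4*a2)*(2*a4+a1*a3) - 216*(a3^2+4*a6)))/(12*(((a1^2+4*a2)^2 - 24*(2*a4+a1*a3)))), by field_simp; try ring⟩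
    obtain ⟨T, hT⟩ : ∃ T : F, 2*T + a1*R + a3 = 0 :=
      ⟨-(a1*R+a3)/2, by field_simp; try ring⟩
    have hM : (288:F)*(((a1^2+4*a2)^2 - 24*(2*a4+a1*a3)))^2 ≠ 0 := by
      refine mul_ne_zero ?_ (pow_ne_zero 2 hc4)
      rw [show (288:F) = 2*12^2 by norm_num]
      exact mul_ne_zero h2 (pow_ne_zero 2 h12)
    have hM3 : (6912:F)*(((a1^2+4*a2)^2 - 24*(2*a4+a1*a3)))^3 ≠ 0 := by
      refine mul_ne_zero ?_ (pow_ne_zero 3 hc4)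
      rw [show (6912:F) = 2*2*12^3 by norm_num]
      exact mul_ne_zero (mul_ne_zero h2 h2) (pow_ne_zero 3 h12)
    refine ⟨R, T, by linear_combination hT, ?_, ?_⟩
    · have key : ((288:F)*(((a1^2+4*a2)^2 - 24*(2*a4+a1*a3)))^2) * (a4 + 2*R*a2 - T*a1 + 3*R^2) = 0 := by
        linear_combination ((-144 : F) * a1^9 + (-2304 : F) * a1^7 * a2 + (6912 : F) * a1^6 * a3 + (-13824 : F) * a1^5 * a2^2 + (13824 : F) * a1^5 * a4 + (55296 : F) * a1^4 * a2 * a3 + (-36864 : F) * a1^3 * a2^3 + (110592 : F) * a1^3 * a2 * a4 + (-82944 : F) * a1^3 * a3^2 + (110592 : F) * a1^2 * a2^2 * a3 + (-331776 : F) * a1^2 * a3 * a4 + (-36864 : F) * a1 * a2^4 + (221184 : F) * a1 * a2^2 * a4 + (-331776 : F) * a1 * a4^2) * hT + ((72 : F) * R * a1^4 + (576 : F) * R * a1^2 * a2 + (-1728 : F) * R * a1 * a3 + (1152 : F) * R * a2^2 + (-3456 : F) * R * a4 + (12 : F) * a1^6 + (144 : F) * a1^4 * a2 + (-360 : F) *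 a1^3 * a3 + (576 : F) * a1^2 * a2^2 + (-720 : F) * a1^2 * a4 + (-1440 : F) * a1 * a2 * a3 + (768 : F) * a2^3 + (-2880 : F) * a2 * a4 + (1296 : F) * a3^2 + (5184 : F) * a6) * hR + ((-10368:F)) * hD
      exact (mul_eq_zero.mp key).resolve_left hM
    · have key : ((6912:F)*(((a1^2+4*a2)^2 - 24*(2*a4+a1*a3)))^3) * (a6 + R*a4 + R^2*a2 + R^3 - T*a3 - T^2 - R*T*a1) = 0 := by
        linear_combination ((-3456 : F) * T * a1^12 + (-82944 : F) * T * a1^10 * a2 + (248832 : F) * T * a1^9 * a3 + (-829440 : F) * T * a1^8 * a2^2 + (497664 : F) * T * a1^8 * a4 + (3981312 : F) * T * a1^7 * a2 * a3 + (-4423680 : F) * T * a1^6 * a2^3 + (7962624 : F) * T * a1^6 * a2 * a4 + (-5971968 : F) * T * a1^6 * a3^2 + (23887872 : F) * T * a1^5 * a2^2 * a3 + (-23887872 : F) * T * a1^5 * a3 * a4 + (-13271040 : F) * T * a1^4 * a2^4 + (47775744 : F) * T * a1^4 * a2^2 * a4 + (-47775744 : F) * T * a1^4 * a2 * a3^2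 + (-23887872 : F) * T * a1^4 * a4^2 + (63700992 : F) * T * a1^3 * a2^3 * a3 + (-191102976 : F) * T * a1^3 * a2 * a3 * a4 + (47775744 : F) * T * a1^3 * a3^3 + (-21233664 : F) * T * a1^2 * a2^5 + (127401984 : F) * T * a1^2 * a2^3 * a4 + (-95551488 : F) * T * a1^2 * a2^2 * a3^2 + (-191102976 : F) * T * a1^2 * a2 * a4^2 + (286654464 : F) * T * a1^2 * a3^2 * a4 + (63700992 : F) * T * a1 * a2^4 * a3 + (-382205952 : F) * T * a1 * a2^2 * a3 * a4 + (573308928 : F) * T * a1 * a3 * a4^2 + (-14155776 : F) * T * a2^6 + (127401984 : F) * T * a2^4 * a4 + (-382205952 : F) * T * a2^2 * a4^2 + (382205952 : F) * T * a4^3 + (-1728 : F) * R * a1^13 + (-41472 : F) * R * a1^11 * a2 + (124416 : F) * R * a1^10 * a3 + (-414720 : F) * R * a1^9 * a2^2 + (248832 : F) * R * a1^9 * a4 + (1990656 : F) * R * a1^8 * a2 * a3 + (-2211840 : F) * R * a1^7 * a2^3 + (3981312 : F) * R * a1^7 * a2 * a4 + (-2985984 : F) * R * a1^7 * a3^2 +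 (11943936 : F) * R * a1^6 * a2^2 * a3 + (-11943936 : F) * R * a1^6 * a3 * a4 + (-6635520 : F) * R * a1^5 * a2^4 + (23887872 : F) * R * a1^5 * a2^2 * a4 + (-23887872 : F) * R * a1^5 * a2 * a3^2 + (-11943936 : F) * R * a1^5 * a4^2 + (31850496 : F) * R * a1^4 * a2^3 * a3 + (-95551488 : F) * R * a1^4 * a2 * a3 * a4 + (23887872 : F) * R * a1^4 * a3^3 + (-10616832 : F) * R * a1^3 * a2^5 + (63700992 : F) * R * a1^3 * a2^3 * a4 + (-47775744 : F) * R * a1^3 * a2^2 * a3^2 + (-95551488 : F) * R * a1^3 * a2 * a4^2 + (143327232 : F) * R * a1^3 * a3^2 * a4 + (31850496 : F) * R * a1^2 * a2^4 * a3 + (-191102976 : F) * R * a1^2 * a2^2 * a3 * a4 + (286654464 : F) * R * a1^2 * a3 * a4^2 + (-7077888 : F) * R * a1 * a2^6 + (63700992 : F) * R * a1 * a2^4 * a4 + (-191102976 : F) * R * a1 * a2^2 * a4^2 + (191102976 : F) * R * a1 * a4^3 + (-1728 : F) * a1^12 * a3 + (-41472 : F) * a1^10 * a2 * a3 + (124416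 : F) * a1^9 * a3^2 + (-414720 : F) * a1^8 * a2^2 * a3 + (248832 : F) * a1^8 * a3 * a4 + (1990656 : F) * a1^7 * a2 * a3^2 + (-2211840 : F) * a1^6 * a2^3 * a3 + (3981312 : F) * a1^6 * a2 * a3 * a4 + (-2985984 : F) * a1^6 * a3^3 + (11943936 : F) * a1^5 * a2^2 * a3^2 + (-11943936 : F) * a1^5 * a3^2 * a4 + (-6635520 : F) * a1^4 * a2^4 * a3 + (23887872 : F) * a1^4 * a2^2 * a3 * a4 + (-23887872 : F) * a1^4 * a2 * a3^3 + (-11943936 : F) * a1^4 * a3 * a4^2 + (31850496 : F) * a1^3 * a2^3 * a3^2 + (-95551488 : F) * a1^3 * a2 * a3^2 * a4 + (23887872 : F) * a1^3 * a3^4 + (-10616832 : F) * a1^2 * a2^5 * a3 + (63700992 : F) * a1^2 * a2^3 * a3 * a4 + (-47775744 : F) * a1^2 * a2^2 * a3^3 + (-95551488 : F) * a1^2 * a2 * a3 * a4^2 + (143327232 : F) * a1^2 * a3^3 * a4 + (31850496 : F) * a1 * a2^4 * a3^2 + (-191102976 : F) * a1 * a2^2 * a3^2 * a4 + (286654464 :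 F) * a1 * a3^2 * a4^2 + (-7077888 : F) * a2^6 * a3 + (63700992 : F) * a2^4 * a3 * a4 + (-191102976 : F) * a2^2 * a3 * a4^2 + (191102976 : F) * a3 * a4^3) * hT + ((576 : F) * R^2 * a1^8 + (9216 : F) * R^2 * a1^6 * a2 + (-27648 : F) * R^2 * a1^5 * a3 + (55296 : F) * R^2 * a1^4 * a2^2 + (-55296 : F) * R^2 * a1^4 * a4 + (-221184 : F) * R^2 * a1^3 * a2 * a3 + (147456 : F) * R^2 * a1^2 * a2^3 + (-442368 : F) * R^2 * a1^2 * a2 * a4 + (331776 : F) * R^2 * a1^2 * a3^2 + (-442368 : F) * R^2 * a1 * a2^2 * a3 + (1327104 : F) * R^2 * a1 * a3 * a4 + (147456 : F) * R^2 * a2^4 + (-884736 : F) * R^2 * a2^2 * a4 + (1327104 : F) * R^2 * a4^2 + (144 : F) * R * a1^10 + (2880 : F) * R * a1^8 * a2 + (-7488 : F) * R * a1^7 * a3 + (23040 : F) * R * a1^6 * a2^2 + (-14976 : F) * R * a1^6 * a4 + (-89856 : F) * R * a1^5 * a2 * a3 + (92160 : F) * R * a1^4 * a2^3 + (-179712 :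 F) * R * a1^4 * a2 * a4 + (107136 : F) * R * a1^4 * a3^2 + (41472 : F) * R * a1^4 * a6 + (-359424 : F) * R * a1^3 * a2^2 * a3 + (387072 : F) * R * a1^3 * a3 * a4 + (184320 : F) * R * a1^2 * a2^4 + (-718848 : F) * R * a1^2 * a2^2 * a4 + (470016 : F) * R * a1^2 * a2 * a3^2 + (331776 : F) * R * a1^2 * a2 * a6 + (387072 : F) * R * a1^2 * a4^2 + (-479232 : F) * R * a1 * a2^3 * a3 + (1548288 : F) * R * a1 * a2 * a3 * a4 + (-248832 : F) * R * a1 * a3^3 + (-995328 : F) * R * a1 * a3 * a6 + (147456 : F) * R * a2^5 + (-958464 : F) * R * a2^3 * a4 + (165888 : F) * R * a2^2 * a3^2 + (663552 : F) * R * a2^2 * a6 + (1548288 : F) * R * a2 * a4^2 + (-497664 : F) * R * a3^2 * a4 + (-1990656 : F) * R * a4 * a6 + (144 : F) * a1^9 * a3 + (288 : F) * a1^8 * a4 + (2304 : F) * a1^7 * a2 * a3 + (4608 : F) * a1^6 * a2 * a4 + (-7200 : F) * a1^6 * a3^2 + (10368 : F) * a1^6 * a6 + (13824 : F) * a1^5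 * a2^2 * a3 + (-39168 : F) * a1^5 * a3 * a4 + (27648 : F) * a1^4 * a2^2 * a4 + (-47232 : F) * a1^4 * a2 * a3^2 + (124416 : F) * a1^4 * a2 * a6 + (-39168 : F) * a1^4 * a4^2 + (36864 : F) * a1^3 * a2^3 * a3 + (-313344 : F) * a1^3 * a2 * a3 * a4 + (82944 : F) * a1^3 * a3^3 + (-331776 : F) * a1^3 * a3 * a6 + (73728 : F) * a1^2 * a2^3 * a4 + (-32256 : F) * a1^2 * a2^2 * a3^2 + (497664 : F) * a1^2 * a2^2 * a6 + (-313344 : F) * a1^2 * a2 * a4^2 + (829440 : F) * a1^2 * a3^2 * a4 + (-663552 : F) * a1^2 * a4 * a6 + (36864 : F) * a1 * a2^4 * a3 + (-626688 : F) * a1 * a2^2 * a3 * a4 + (-331776 : F) * a1 * a2 * a3^3 + (-1327104 : F) * a1 * a2 * a3 * a6 + (1990656 : F) * a1 * a3 * a4^2 + (73728 : F) * a2^4 * a4 + (165888 : F) * a2^3 * a3^2 + (663552 : F) * a2^3 * a6 + (-626688 : F) * a2^2 * a4^2 + (-663552 : F) * a2 * a3^2 * a4 + (-2654208 : F) * a2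 * a4 * a6 + (186624 : F) * a3^4 + (1492992 : F) * a3^2 * a6 + (1327104 : F) * a4^3 + (2985984 : F) * a6^2) * hR + ((-6912 : F) * a1^6 + (-82944 : F) * a1^4 * a2 + (248832 : F) * a1^3 * a3 + (-331776 : F) * a1^2 * a2^2 + (497664 : F) * a1^2 * a4 + (995328 : F) * a1 * a2 * a3 + (-442368 : F) * a2^3 + (1990656 : F) * a2 * a4 + (-1492992 : F) * a3^2 + (-5971968 : F) * a6) * hD
      exact (mul_eq_zero.mp key).resolve_left hM3

set_option maxRecDepth 4000 in
lemma exists_RT_two :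
    ∀ a1 a2 a3 a4 a6 : ZMod 2,
    (-(a1^2+4*a2)^2*(a1^2*a6+4*a2*a6-a1*a3*a4+a2*a3^2-a4^2) - 8*(2*a4+a1*a3)^3 - 27*(a3^2+4*a6)^2 + 9*(a1^2+4*a2)*(2*a4+a1*a3)*(a3^2+4*a6)) = 0 →
    ∃ R T : ZMod 2, a3 + R*a1 + 2*T = 0 ∧ a4 + 2*R*a2 - T*a1 + 3*R^2 = 0 ∧
      a6 + R*a4 + R^2*a2 + R^3 - T*a3 - T^2 - R*T*a1 = 0 := by decide

set_option maxRecDepth 4000 in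
lemma exists_RT_three :
    ∀ a1 a2 a3 a4 a6 : ZMod 3,
    (-(a1^2+4*a2)^2*(a1^2*a6+4*a2*a6-a1*a3*a4+a2*a3^2-a4^2) - 8*(2*a4+a1*a3)^3 - 27*(a3^2+4*a6)^2 + 9*(a1^2+4*a2)*(2*a4+a1*a3)*(a3^2+4*a6)) = 0 →
    ∃ R T : ZMod 3, a3 + R*a1 + 2*T = 0 ∧ a4 + 2*R*a2 - T*a1 + 3*R^2 = 0 ∧
      a6 + R*a4 + R^2*a2 + R^3 - T*a3 - T^2 - R*T*a1 = 0 := by decide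

lemma exists_RT_zmod (p : ℕ) (hp : p.Prime) (a1 a2 a3 a4 a6 : ZMod p)
    (hD : (-(a1^2+4*a2)^2*(a1^2*a6+4*a2*a6-a1*a3*a4+a2*a3^2-a4^2) - 8*(2*a4+a1*a3)^3 - 27*(a3^2+4*a6)^2 + 9*(a1^2+4*a2)*(2*a4+a1*a3)*(a3^2+4*a6)) = 0) :
    ∃ R T : ZMod p, a3 + R*a1 + 2*T = 0 ∧ a4 + 2*R*a2 - T*a1 + 3*R^2 = 0 ∧
      a6 + R*a4 + R^2*a2 + R^3 - T*a3 - T^2 - R*T*a1 = 0 := by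
  haveI : Fact p.Prime := ⟨hp⟩
  by_cases h2 : (2 : ZMod p) = 0
  · have hp2 : p = 2 := by
      have h2' : ((2 : ℕ) : ZMod p) = 0 := by exact_mod_cast h2
      have := (ZMod.natCast_eq_zero_iff 2 p).mp h2'
      exact (Nat.prime_dvd_prime_iff_eq hp Nat.prime_two).mp this
    subst hp2
    exact exists_RT_two a1 a2 a3 a4 a6 hD
  · by_cases h3 : (3 : ZMod p) = 0
    · have hp3 : p = 3 := by
        have h3' : ((3 : ℕ) : ZMod p) = 0 := by exact_mod_cast h3
        have := (ZMod.natCast_eq_zero_iff 3 p).mp h3'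
        exact (Nat.prime_dvd_prime_iff_eq hp Nat.prime_three).mp this
      subst hp3
      exact exists_RT_three a1 a2 a3 a4 a6 hD
    · exact exists_RT_of_char h2 h3 a1 a2 a3 a4 a6 hD

variable {F : Type*} [CommRing F]

/-- The Weierstrass curve `y² + Axy = x³ + Bx²`. -/
def mkW (A B : F) : WeierstrassCurve F := ⟨A, B, 0, 0, 0⟩

lemma mkW_Δ (A B : F) : (mkW A B).Δ = 0 := by
  rw [delta_explicit]
  simp only [mkW]
  ring

/-- The variable change `(u,r,s,t) = (1,r,0,t)`. -/
def vcRT (r t : F) : VariableChange F := ⟨1, r, 0, t⟩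

lemma vcRT_comp (r t r' t' : F) :
    (vcRT r t) * (vcRT r' t') = vcRT (r + r') (t + t') := by
  ext <;> simp [vcRT, VariableChange.mul_def] <;> ring

lemma vc_vcRT_zero (W : WeierstrassCurve F) : vcRT (0:F) 0 • W = W := by
  have h : vcRT (0:F) 0 = 1 := rfl
  rw [h, one_smul]

lemma vc_mkW_eq_mkW {F : Type*} [Field F] {A B A' B' R T : F}
    (h : vcRT R T • mkW A B = mkW A' B') :
    R = 0 ∧ T = 0 ∧ A = A' ∧ B = B' := by
  have e1 := congrArg WeierstrassCurve.a₁ h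
  have e2 := congrArg WeierstrassCurve.a₂ h
  have e3 := congrArg WeierstrassCurve.a₃ h
  have e4 := congrArg WeierstrassCurve.a₄ h
  have e6 := congrArg WeierstrassCurve.a₆ h
  simp only [variableChange_a₁, variableChange_a₂, variableChange_a₃, variableChange_a₄,
    variableChange_a₆, mkW, vcRT, inv_one, Units.val_one, one_pow, one_mul] at e1 e2 e3 e4 e6
  have hR3 : R^3 = 0 := by linear_combination R*e4 - T*e3 - 2*e6
  have hR : R = 0 := pow_eq_zero_iff (by norm_num : (3:ℕ) ≠ 0) |>.mp hR3
  subst hR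
  have hT2 : T^2 = 0 := by linear_combination -e6
  have hT : T = 0 := pow_eq_zero_iff (by norm_num : (2:ℕ) ≠ 0) |>.mp hT2
  subst hT
  exact ⟨rfl, rfl, by linear_combination e1, by linear_combination e2⟩

/-- Parametrization of the singular Weierstrass curves. -/
def singMap (x : (F × F) × F × F) : WeierstrassCurve F :=
  vcRT x.2.1 x.2.2 • mkW x.1.1 x.1.2

lemma singMap_Δ (x : (F × F) × F × F) : (singMap x).Δ = 0 := by
  rw [singMap, variableChange_Δ, mkW_Δ, mul_zero]

lemma singMap_injective {F : Type*} [Field F] : Function.Injective (singMap (F := F)) := by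
  intro x y h
  have h2 := congrArg (fun W => vcRT (-y.2.1) (-y.2.2) • W) h
  simp only [singMap] at h2
  rw [← mul_smul, ← mul_smul, vcRT_comp, vcRT_comp, neg_add_cancel,
    neg_add_cancel, vc_vcRT_zero] at h2
  obtain ⟨hR, hT, hA, hB⟩ := vc_mkW_eq_mkW h2
  have hx1 : x.1.1 = y.1.1 := hA
  have hx2 : x.1.2 = y.1.2 := hB
  have hx3 : x.2.1 = y.2.1 := by linear_combination hR
  have hx4 : x.2.2 = y.2.2 := by linear_combination hT
  exact Prod.ext (Prod.ext hx1 hx2) (Prod.ext hx3 hx4)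

end Aux

section Surj

lemma singMap_surjOn (p : ℕ) (hp : p.Prime) (W : WeierstrassCurve (ZMod p)) (hW : W.Δ = 0) :
    ∃ x, singMap x = W := by
  rw [delta_explicit] at hW
  obtain ⟨R, T, h1, h2, h3⟩ := exists_RT_zmod p hp W.a₁ W.a₂ W.a₃ W.a₄ W.a₆ hW
  have key : vcRT R T • W = mkW W.a₁ (W.a₂ + 3*R) := by
    have g1 : (vcRT R T • W).a₁ = W.a₁ := by
      simp only [variableChange_a₁, vcRT, inv_one, Units.val_one]; ring
    have g2 : (vcRT R T • W).a₂ = W.a₂ + 3*R := by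
      simp only [variableChange_a₂, vcRT, inv_one, Units.val_one]; ring
    have g3 : (vcRT R T • W).a₃ = 0 := by
      simp only [variableChange_a₃, vcRT, inv_one, Units.val_one]
      linear_combination h1
    have g4 : (vcRT R T • W).a₄ = 0 := by
      simp only [variableChange_a₄, vcRT, inv_one, Units.val_one]
      linear_combination h2
    have g6 : (vcRT R T • W).a₆ = 0 := by
      simp only [variableChange_a₆, vcRT, inv_one, Units.val_one]
      linear_combination h3
    exact WeierstrassCurve.ext g1 g2 g3 g4 g6
  refine ⟨⟨⟨W.a₁, W.a₂ + 3*R⟩, ⟨-R, -T⟩⟩, ?_⟩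
  show vcRT (-R) (-T) • mkW W.a₁ (W.a₂ + 3*R) = W
  rw [← key, ← mul_smul, vcRT_comp, neg_add_cancel, neg_add_cancel]
  exact vc_vcRT_zero W

end Surj

section Counting

variable (p : ℕ) [Fact p.Prime]

/-- `WeierstrassCurve F ≃ F⁵`. -/
def wEquiv (F : Type*) [CommRing F] : WeierstrassCurve F ≃ F × F × F × F × F where
  toFun W := (W.a₁, W.a₂, W.a₃, W.a₄, W.a₆)
  invFun x := ⟨x.1, x.2.1, x.2.2.1, x.2.2.2.1, x.2.2.2.2⟩
  left_inv W := rfl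
  right_inv x := rfl

/-- `VariableChange F ≃ Fˣ × F³`. -/
def vcEquiv (F : Type*) [CommRing F] : VariableChange F ≃ Fˣ × F × F × F where
  toFun C := (C.u, C.r, C.s, C.t)
  invFun x := ⟨x.1, x.2.1, x.2.2.1, x.2.2.2⟩
  left_inv C := rfl
  right_inv x := rfl

instance : Finite (WeierstrassCurve (ZMod p)) := Finite.of_equiv _ (wEquiv (ZMod p)).symm

instance : Finite (VariableChange (ZMod p)) := Finite.of_equiv _ (vcEquiv (ZMod p)).symm

instance : Finite (EllCurve (ZMod p)) := by
  unfold EllCurve; infer_instance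

lemma card_vc : Nat.card (VariableChange (ZMod p)) = (p - 1) * p^3 := by
  have hu : Nat.card (ZMod p)ˣ = p - 1 := by
    rw [Nat.card_eq_fintype_card, ZMod.card_units_eq_totient,
      Nat.totient_prime (Fact.out : p.Prime)]
  rw [Nat.card_congr (vcEquiv (ZMod p)), Nat.card_prod, Nat.card_prod, Nat.card_prod, hu,
    Nat.card_zmod]
  ring

lemma card_wc : Nat.card (WeierstrassCurve (ZMod p)) = p^5 := by
  rw [Nat.card_congr (wEquiv (ZMod p)), Nat.card_prod, Nat.card_prod, Nat.card_prod,
    Nat.card_prod, Nat.card_zmod]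
  ring

lemma card_sing : Nat.card {W : WeierstrassCurve (ZMod p) // W.Δ = 0} = p^4 := by
  have hbij : Function.Bijective
      (fun x : (ZMod p × ZMod p) × ZMod p × ZMod p => (⟨singMap x, singMap_Δ x⟩ :
        {W : WeierstrassCurve (ZMod p) // W.Δ = 0})) := by
    constructor
    · intro a b h
      exact singMap_injective (congrArg Subtype.val h)
    · rintro ⟨W, hW⟩
      obtain ⟨x, hx⟩ := singMap_surjOn p (Fact.out : p.Prime) W hW
      exact ⟨x, Subtype.ext hx⟩
  rw [← Nat.card_congr (Equiv.ofBijective _ hbij), Nat.card_prod, Nat.card_prod,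
    Nat.card_zmod]
  ring

lemma card_ell : Nat.card (EllCurve (ZMod p)) = p^5 - p^4 := by
  classical
  have e : EllCurve (ZMod p) ≃ {W : WeierstrassCurve (ZMod p) // ¬ W.Δ = 0} :=
    Equiv.subtypeEquivRight fun W => by
      rw [WeierstrassCurve.isElliptic_iff, isUnit_iff_ne_zero]
  letI : Fintype (WeierstrassCurve (ZMod p)) := Fintype.ofFinite _
  rw [Nat.card_congr e, Nat.card_eq_fintype_card, Fintype.card_subtype_compl,
    ← Nat.card_eq_fintype_card, ← Nat.card_eq_fintype_card, card_wc, card_sing]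

end Counting

section OrbitStab

variable {F : Type*} [Field F] [Finite (WeierstrassCurve F)] [Finite (VariableChange F)]

/-- The fiber of the class map over `⟦E⟧` is equivalent to the orbit of `E` under
variable changes. -/
noncomputable def fiberEquiv (E : EllCurve F) :
    {E' : EllCurve F // Quotient.mk (isoSetoid F) E' = Quotient.mk (isoSetoid F) E} ≃
      MulAction.orbit (VariableChange F) E.1 where
  toFun E' := ⟨E'.1.1, Quotient.exact E'.2⟩
  invFun W := ⟨⟨W.1, by
      obtain ⟨g, hg⟩ := W.2
      haveI := E.2
      rw [← hg]
      show (g • E.1).IsElliptic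
      infer_instance⟩,
    Quotient.sound W.2⟩
  left_inv E' := Subtype.ext (Subtype.ext rfl)
  right_inv W := Subtype.ext rfl

lemma autCard_mul_fiber (E : EllCurve F) :
    Nat.card {E' : EllCurve F // Quotient.mk (isoSetoid F) E' = Quotient.mk (isoSetoid F) E} *
      autCard E = Nat.card (VariableChange F) := by
  haveI : Finite (EllCurve F) := by unfold EllCurve; infer_instance
  letI : Fintype (VariableChange F) := Fintype.ofFinite _
  letI : Fintype (MulAction.orbit (VariableChange F) E.1) := Fintype.ofFinite _
  letI : Fintype (MulAction.stabilizer (VariableChange F) E.1) := Fintype.ofFinite _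
  have h1 : autCard E = Nat.card (MulAction.stabilizer (VariableChange F) E.1) :=
    Nat.card_congr ((Equiv.subtypeEquivRight fun c => (MulAction.mem_stabilizer_iff).symm :
      {C : VariableChange F // C • E.1 = E.1} ≃ MulAction.stabilizer (VariableChange F) E.1))
  have h2 := MulAction.card_orbit_mul_card_stabilizer_eq_card_group (VariableChange F) E.1
  rw [Nat.card_congr (fiberEquiv E), h1]
  simp only [Nat.card_eq_fintype_card]
  exact h2

lemma autCard_pos (E : EllCurve F) : 0 < autCard E := by
  have : Nonempty {C : VariableChange F // C • E.1 = E.1} := ⟨⟨1, one_smul _ _⟩⟩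
  exact Nat.card_pos

end OrbitStab

/-- mass formula: the sum over all isomorphism classes of elliptic curves
over `F_p` of `1/#Aut_{F_p}(E)` equals `p`. -/
theorem elliptic_curve_mass_formula (p : ℕ) (hp : p.Prime) [Fact p.Prime]
    [Fintype (EllCurveClasses (ZMod p))] :
    ∑ C : EllCurveClasses (ZMod p), 1 / (autCard C.out : ℚ) = p := by
  classical
  have hpart : Nat.card (EllCurve (ZMod p)) = ∑ C : EllCurveClasses (ZMod p),
      Nat.card {E : EllCurve (ZMod p) // Quotient.mk (isoSetoid (ZMod p)) E = C} := by
    letI : Fintype (EllCurve (ZMod p)) := Fintype.ofFinite _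
    letI I : ∀ C : EllCurveClasses (ZMod p),
        Fintype {E : EllCurve (ZMod p) // Quotient.mk (isoSetoid (ZMod p)) E = C} :=
      fun C => Fintype.ofFinite _
    rw [Nat.card_congr (Equiv.sigmaFiberEquiv (Quotient.mk (isoSetoid (ZMod p)))).symm,
      Nat.card_eq_fintype_card, Fintype.card_sigma]
    exact Finset.sum_congr (by congr 1; exact Subsingleton.elim _ _) fun C _ => (Nat.card_eq_fintype_card).symm
  have hfib : ∀ C : EllCurveClasses (ZMod p),
      (Nat.card {E : EllCurve (ZMod p) // Quotient.mk (isoSetoid (ZMod p)) E = C} : ℚ) *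
        (autCard C.out : ℚ) = (Nat.card (VariableChange (ZMod p)) : ℚ) := by
    intro C
    have h := autCard_mul_fiber (C.out)
    rw [show Quotient.mk (isoSetoid (ZMod p)) C.out = C from Quot.out_eq C] at h
    exact_mod_cast congrArg (fun n : ℕ => (n : ℚ)) h
  have haut : ∀ C : EllCurveClasses (ZMod p), (autCard (Quotient.out C) : ℚ) ≠ 0 :=
    fun C => Nat.cast_ne_zero.mpr (autCard_pos _).ne'
  have hp2 : 2 ≤ p := hp.two_le
  have hG0 : (Nat.card (VariableChange (ZMod p)) : ℚ) ≠ 0 := by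
    rw [card_vc]
    refine Nat.cast_ne_zero.mpr (Nat.mul_ne_zero ?_ ?_)
    · exact Nat.sub_ne_zero_of_lt hp.one_lt
    · exact pow_ne_zero _ hp.pos.ne'
  have step1 : ∑ C : EllCurveClasses (ZMod p), 1 / (autCard C.out : ℚ) =
      ∑ C : EllCurveClasses (ZMod p),
        (Nat.card {E : EllCurve (ZMod p) // Quotient.mk (isoSetoid (ZMod p)) E = C} : ℚ) /
          (Nat.card (VariableChange (ZMod p)) : ℚ) := by
    refine Finset.sum_congr rfl fun C _ => ?_
    rw [div_eq_div_iff (haut C) hG0]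
    linear_combination -(hfib C)
  rw [step1, ← Finset.sum_div]
  have hsum : (∑ C : EllCurveClasses (ZMod p),
      (Nat.card {E : EllCurve (ZMod p) // Quotient.mk (isoSetoid (ZMod p)) E = C} : ℚ)) =
      (Nat.card (EllCurve (ZMod p)) : ℚ) := by
    rw [hpart]
    push_cast
    rfl
  rw [hsum, card_ell, card_vc]
  have h45 : p^4 ≤ p^5 := Nat.pow_le_pow_right hp.pos (by norm_num)
  have h1p : 1 ≤ p := hp.one_lt.le
  rw [Nat.cast_sub h45, Nat.cast_mul, Nat.cast_sub h1p]
  push_cast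
  have hden : (((p:ℚ) - 1) * (p:ℚ)^3) ≠ 0 := by
    refine mul_ne_zero ?_ (pow_ne_zero _ ?_)
    · have : (2:ℚ) ≤ (p:ℚ) := by exact_mod_cast hp2
      intro h; rw [sub_eq_zero] at h; rw [h] at this; norm_num at this
    · have : (2:ℚ) ≤ (p:ℚ) := by exact_mod_cast hp2
      intro h; rw [h] at this; norm_num at this
  rw [div_eq_iff hden]
  ring
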